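/- (Corollary B, Lipschitz version) Let f : ℝ^n → ℝ be a C^1 function with |∇f(x)| = 1 for all x (entire light-like graph). Assume the light-like line theorem: through every point of a C^1 light-like graph passes a light-like line segment in the graph. Then f(x) = ⟨x, v⟩ + c for some unit vector v ∈ ℝ^n and constant c; i.e. the graph is a light-like hyperplane. -/

import Mathlib

open RealInnerProductSpace

section aux
variable {n : ℕ}

private lemma grad_of_seg (f : EuclideanSpace ℝ (Fin n) → ℝ) (hf : ContDiff ℝ 1 f)
    (hlight : ∀ x, ‖gradient f x‖ = 1) (y v : EuclideanSpace ℝ (Fin n)) (hv : ‖v‖ = 1)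
    (ε : ℝ) (hε : 0 < ε) (hseg : ∀ t : ℝ, |t| < ε → f (y + t • v) = f y + t) :
    gradient f y = v := by
  have hdiff := (hf.differentiable one_ne_zero) y
  have hγ : HasDerivAt (fun t : ℝ => y + t • v) v 0 := by
    simpa using ((hasDerivAt_id (0:ℝ)).smul_const v).const_add y
  have h0 : HasFDerivAt f (fderiv ℝ f y) (y + (0:ℝ) • v) := by
    simpa using hdiff.hasFDerivAt
  have hcomp : HasDerivAt (fun t : ℝ => f (y + t • v)) (fderiv ℝ f y v) 0 :=
    h0.comp_hasDerivAt 0 hγ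
  have hconst : HasDerivAt (fun t : ℝ => f y + t) 1 0 := (hasDerivAt_id (0:ℝ)).const_add (f y)
  have heq : (fun t : ℝ => f (y + t • v)) =ᶠ[nhds (0:ℝ)] fun t => f y + t := by
    filter_upwards [Metric.ball_mem_nhds (0:ℝ) hε] with t ht
    exact hseg t (by simpa [Real.dist_eq] using ht)
  have huniq : fderiv ℝ f y v = 1 :=
    hcomp.unique (hconst.congr_of_eventuallyEq heq)
  have hinner : ⟪gradient f y, v⟫ = 1 := by
    rw [gradient, InnerProductSpace.toDual_symm_apply]; exact huniq
  exact (inner_eq_one_iff_of_norm_eq_one (hlight y) hv).mp hinner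

private lemma line_all (f : EuclideanSpace ℝ (Fin n) → ℝ) (hf : ContDiff ℝ 1 f)
    (hlight : ∀ x, ‖gradient f x‖ = 1)
    (lineThm : ∀ x : EuclideanSpace ℝ (Fin n),
      ∃ v : EuclideanSpace ℝ (Fin n), ‖v‖ = 1 ∧
        ∃ ε > 0, ∀ t : ℝ, |t| < ε → f (x + t • v) = f x + t)
    (x : EuclideanSpace ℝ (Fin n)) :
    ∀ t : ℝ, f (x + t • gradient f x) = f x + t := by
  have hgcont : Continuous fun y : EuclideanSpace ℝ (Fin n) => gradient f y := by
    exact (InnerProductSpace.toDual ℝ _).symm.continuous.comp (hf.continuous_fderiv one_ne_zero)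
  set g := gradient f x with hg
  set S : Set ℝ := {t | f (x + t • g) = f x + t ∧ gradient f (x + t • g) = g} with hSdef
  have hS0 : (0:ℝ) ∈ S := by constructor <;> simp [hg]
  have hclosed : IsClosed S := by
    apply IsClosed.inter
    · exact isClosed_eq (hf.continuous.comp (by continuity)) (by continuity)
    · exact isClosed_eq (hgcont.comp (by continuity)) continuous_const
  have hopen : IsOpen S := by
    rw [Metric.isOpen_iff]
    rintro t0 ⟨hft, hgt⟩
    obtain ⟨v, hv, ε, hε, hseg⟩ := lineThm (x + t0 • g)
    have hveq : v = g := by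
      rw [← grad_of_seg f hf hlight _ v hv ε hε hseg, hgt]
    refine ⟨ε, hε, ?_⟩
    intro s hs
    rw [Metric.mem_ball, Real.dist_eq] at hs
    have hpt : x + s • g = (x + t0 • g) + (s - t0) • v := by
      rw [hveq]; rw [add_assoc, ← add_smul]; ring_nf
    have h1 : f (x + s • g) = f x + s := by
      rw [hpt, hseg (s - t0) hs, hft]; ring
    have h2 : gradient f (x + s • g) = g := by
      have hseg2 : ∀ r : ℝ, |r| < ε - |s - t0| → f ((x + s • g) + r • v) = f (x + s • g) + r := by
        intro r hr
        have hpt2 : (x + s • g) + r • v = (x + t0 • g) + (s - t0 + r) • v := by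
          rw [hpt, add_assoc, ← add_smul]
        have habs : |s - t0 + r| < ε := by
          calc |s - t0 + r| ≤ |s - t0| + |r| := abs_add_le _ _
            _ < ε := by linarith
        rw [hpt2, hseg _ habs, h1, hft]; ring
      rw [grad_of_seg f hf hlight _ v hv (ε - |s - t0|) (by linarith) hseg2, hveq]
    exact ⟨h1, h2⟩
  have hclopen : IsClopen S := ⟨hclosed, hopen⟩
  have hall : S = Set.univ := hclopen.eq_univ ⟨0, hS0⟩
  intro t
  have : t ∈ S := by rw [hall]; trivial
  exact this.1

private lemma asymp {n : ℕ} {w u : EuclideanSpace ℝ (Fin n)} (hu : ‖u‖ = 1) {C : ℝ}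
    (h : ∀ t : ℝ, 0 < t → C + t ≤ ‖w + t • u‖) : C ≤ ⟪w, u⟫ := by
  refine le_of_forall_pos_le_add fun ε hε => ?_
  set t : ℝ := ‖w‖^2/(2*ε) + |⟪w, u⟫| + 1 with ht
  have ht0 : 0 < t := by positivity
  set s : ℝ := t + ⟪w, u⟫ with hs
  have hs1 : ‖w‖^2/(2*ε) + 1 ≤ s := by
    have := neg_abs_le ⟪w, u⟫
    rw [hs, ht]; linarith
  have hwnn : (0:ℝ) ≤ ‖w‖^2/(2*ε) := by positivity
  have hs0 : 0 < s := by linarith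
  have hexp : ‖w + t • u‖^2 = ‖w‖^2 + 2*(t*⟪w,u⟫) + t^2 := by
    rw [@norm_add_sq_real _ _ _ w (t • u), real_inner_smul_right, norm_smul]
    simp [hu, abs_of_pos ht0]
  set δ : ℝ := ‖w‖^2/(2*s) with hδdef
  have hδnn : 0 ≤ δ := by positivity
  have hb : ‖w + t • u‖ ≤ s + δ := by
    have hnn : 0 ≤ ‖w + t • u‖ := norm_nonneg _
    have hsq : ‖w + t • u‖^2 ≤ (s + δ)^2 := by
      have h1 : s * δ = ‖w‖^2/2 := by
        rw [hδdef]; field_simp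
      have hrhs2 : (s + δ)^2 = s^2 + 2*(s*δ) + δ^2 := by ring
      have hssq : s^2 = t^2 + 2*(t*⟪w,u⟫) + ⟪w,u⟫^2 := by rw [hs]; ring
      rw [hrhs2, h1]
      linarith [sq_nonneg (⟪w,u⟫ : ℝ), sq_nonneg δ, hexp, hssq]
    calc ‖w + t • u‖ = Real.sqrt (‖w + t • u‖^2) := (Real.sqrt_sq hnn).symm
      _ ≤ Real.sqrt ((s + δ)^2) := Real.sqrt_le_sqrt hsq
      _ = s + δ := Real.sqrt_sq (by linarith)
  have hδε : δ ≤ ε := by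
    rw [hδdef, div_le_iff₀ (by linarith)]
    have h3 : ‖w‖^2/(2*ε) ≤ s - 1 := by linarith
    rw [div_le_iff₀ (by positivity)] at h3
    nlinarith [h3, hε.le]
  have := h t ht0
  linarith

end aux

theorem stmt12 {n : ℕ} (f : EuclideanSpace ℝ (Fin n) → ℝ) (hf : ContDiff ℝ 1 f)
    (hlight : ∀ x, ‖gradient f x‖ = 1)
    (lineThm : ∀ x : EuclideanSpace ℝ (Fin n),
      ∃ v : EuclideanSpace ℝ (Fin n), ‖v‖ = 1 ∧
        ∃ ε > 0, ∀ t : ℝ, |t| < ε → f (x + t • v) = f x + t) :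
    ∃ (v : EuclideanSpace ℝ (Fin n)) (c : ℝ), ‖v‖ = 1 ∧ ∀ x, f x = ⟪x, v⟫ + c := by
  set v := gradient f 0 with hv
  refine ⟨v, f 0, hlight 0, fun x => ?_⟩
  have hline := line_all f hf hlight lineThm 0
  have hlip : ∀ a b : EuclideanSpace ℝ (Fin n), ‖f a - f b‖ ≤ 1 * ‖a - b‖ := by
    intro a b
    refine convex_univ.norm_image_sub_le_of_norm_fderiv_le
      (fun y _ => (hf.differentiable one_ne_zero) y) (fun y _ => ?_) trivial trivial
    have : ‖gradient f y‖ = ‖fderiv ℝ f y‖ :=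
      (InnerProductSpace.toDual ℝ _).symm.norm_map (fderiv ℝ f y)
    rw [← this, hlight y]
  have hu : ‖v‖ = 1 := hlight 0
  have key1 : f x - f 0 ≤ ⟪x, v⟫ := by
    refine asymp hu fun t htpos => ?_
    have h1 : f (0 + (-t) • v) = f 0 + (-t) := hline (-t)
    have h2 := hlip x (0 + (-t) • v)
    rw [h1] at h2
    have h3 : x - (0 + (-t) • v) = x + t • v := by
      simp [sub_eq_add_neg, neg_smul]
    rw [h3] at h2
    have h4 : f x - (f 0 + -t) ≤ ‖x + t • v‖ :=
      (le_abs_self _).trans (by simpa [Real.norm_eq_abs] using h2)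
    linarith
  have key2 : f 0 - f x ≤ ⟪-x, v⟫ := by
    refine asymp hu fun t htpos => ?_
    have h1 : f (0 + t • v) = f 0 + t := hline t
    have h2 := hlip (0 + t • v) x
    rw [h1] at h2
    have h3 : (0 + t • v) - x = -x + t • v := by abel
    rw [h3] at h2
    have h4 : f 0 + t - f x ≤ ‖-x + t • v‖ :=
      (le_abs_self _).trans (by simpa [Real.norm_eq_abs] using h2)
    linarith
  have e2 : ⟪-x, v⟫ = -⟪x, v⟫ := by rw [inner_neg_left]
  rw [e2] at key2
  linarith
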